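/- Let Ψ = (ψ_1,…,ψ_t) be a system of non-constant affine-linear forms on Z^d with all homogeneous coefficients and constant terms bounded in absolute value by L. Then for every prime p the local factor β_p := E_{n ∈ F_p^d} ∏_{i∈[t]} Λ_{Z_p}(ψ_i(n)) satisfies β_p = 1 + O_{t,d,L}(1/p), i.e. |β_p − 1| ≤ C(t,d,L)/p for some constant C(t,d,L). -/

import Mathlib

/-- The local von Mangoldt function `Λ_{ℤ_q}(b) = q/φ(q)` if `gcd(b,q) = 1`, else `0`. -/
noncomputable def localVonMangoldt (q : ℕ) (b : ℤ) : ℝ :=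
  if Int.gcd b q = 1 then (q : ℝ) / (Nat.totient q : ℝ) else 0

/-- The local factor `β_q` of the system of affine-linear forms `ψ_i(n) = ∑_j A i j * n j + c i`. -/
noncomputable def localFactor (t d q : ℕ) (A : Fin t → Fin d → ℤ) (c : Fin t → ℤ) : ℝ :=
  (∑ n : Fin d → Fin q, ∏ i, localVonMangoldt q (∑ j, A i j * (n j : ℤ) + c i)) / (q : ℝ) ^ d

lemma gcd_iff_aux (p : ℕ) (hp : p.Prime) (b : ℤ) : Int.gcd b p = 1 ↔ ((b : ZMod p) ≠ 0) := by
  rw [← Int.isCoprime_iff_gcd_eq_one, isCoprime_comm,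
    (Nat.prime_iff_prime_int.mp hp).coprime_iff_not_dvd, Ne, ZMod.intCast_zmod_eq_zero_iff_dvd]

lemma pow_bd_aux (t : ℕ) (x : ℝ) (h0 : 0 ≤ x) (h1 : x ≤ 1) : (1+x)^t ≤ 1 + (2^t - 1)*x := by
  induction t with
  | zero => simp
  | succ t ih =>
    have h2 : (1:ℝ) ≤ 2^t := one_le_pow₀ (by norm_num)
    calc (1+x)^(t+1) = (1+x)^t * (1+x) := pow_succ _ _
      _ ≤ (1 + (2^t-1)*x) * (1+x) := by
          apply mul_le_mul_of_nonneg_right ih (by linarith)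
      _ ≤ 1 + (2^(t+1)-1)*x := by
          rw [pow_succ]
          nlinarith [mul_nonneg (mul_nonneg h0 (by linarith : (0:ℝ) ≤ 1 - x))
            (by linarith : (0:ℝ) ≤ 2^t - 1)]

open Finset in
lemma count_le_aux (p d : ℕ) (hp : p.Prime) (a : Fin d → ℤ) (b : ℤ) (j₀ : Fin d)
    (ha : ((a j₀ : ℤ) : ZMod p) ≠ 0) :
    (Finset.univ.filter fun n : Fin d → Fin p =>
      ((∑ j, a j * ((n j : ℕ) : ℤ) + b : ℤ) : ZMod p) = 0).card ≤ p ^ (d - 1) := by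
  haveI : Fact p.Prime := ⟨hp⟩
  classical
  have hcard : Fintype.card ({j : Fin d // j ≠ j₀} → Fin p) = p ^ (d - 1) := by
    rw [Fintype.card_fun, Fintype.card_fin, Fintype.card_subtype_compl,
      Fintype.card_subtype_eq, Fintype.card_fin]
  calc (Finset.univ.filter fun n : Fin d → Fin p =>
      ((∑ j, a j * ((n j : ℕ) : ℤ) + b : ℤ) : ZMod p) = 0).card
      ≤ (Finset.univ : Finset ({j : Fin d // j ≠ j₀} → Fin p)).card := ?_
    _ = p ^ (d - 1) := by rw [Finset.card_univ, hcard]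
  apply Finset.card_le_card_of_injOn (fun n (j : {j : Fin d // j ≠ j₀}) => n j)
    (fun _ _ => Finset.mem_univ _)
  intro n hn m hm hnm
  simp only [Finset.mem_coe, Finset.mem_filter, Finset.mem_univ, true_and] at hn hm
  push_cast at hn hm
  have hrest : ∀ j, j ≠ j₀ → n j = m j := fun j hj => congrFun hnm ⟨j, hj⟩
  have hsum : ∀ n : Fin d → Fin p,
      (∑ j, (a j : ZMod p) * ((n j : ℕ) : ZMod p)) =
      (a j₀ : ZMod p) * ((n j₀ : ℕ) : ZMod p)
        + ∑ j ∈ Finset.univ.erase j₀, (a j : ZMod p) * ((n j : ℕ) : ZMod p) :=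
    fun n => (Finset.add_sum_erase _ _ (Finset.mem_univ j₀)).symm
  rw [hsum] at hn hm
  have hre : ∑ j ∈ Finset.univ.erase j₀, (a j : ZMod p) * ((n j : ℕ) : ZMod p)
      = ∑ j ∈ Finset.univ.erase j₀, (a j : ZMod p) * ((m j : ℕ) : ZMod p) :=
    Finset.sum_congr rfl fun j hj => by
      rw [hrest j (Finset.mem_erase.mp hj).1]
  rw [hre] at hn
  have hmul : (a j₀ : ZMod p) * ((n j₀ : ℕ) : ZMod p)
      = (a j₀ : ZMod p) * ((m j₀ : ℕ) : ZMod p) := by linear_combination hn - hm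
  have hval := mul_left_cancel₀ ha hmul
  funext j
  by_cases hj : j = j₀
  · subst hj
    exact Fin.ext (by rw [← ZMod.val_cast_of_lt (n j).isLt,
      ← ZMod.val_cast_of_lt (m j).isLt, hval])
  · exact hrest j hj

set_option maxHeartbeats 1600000 in
/-- For any system of non-constant affine-linear forms with coefficients and constant terms
bounded by `L`, the local factor satisfies `β_p = 1 + O_{t,d,L}(1/p)` for every prime `p`. -/
theorem localFactor_one_add_O_inv (t d L : ℕ) (ht : 1 ≤ t) (hd : 1 ≤ d) (hL : 1 ≤ L) :
    ∃ C : ℝ, 0 < C ∧ ∀ (A : Fin t → Fin d → ℤ) (c : Fin t → ℤ),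
      (∀ i, A i ≠ 0) → (∀ i j, |A i j| ≤ (L : ℤ)) → (∀ i, |c i| ≤ (L : ℤ)) →
      ∀ p : ℕ, p.Prime → |localFactor t d p A c - 1| ≤ C / (p : ℝ) := by
  classical
  refine ⟨(L : ℝ) * (2^(t+1) + t + 1), by positivity, ?_⟩
  intro A c hA hAL hcL p hp
  haveI : Fact p.Prime := ⟨hp⟩
  have hp1 : (1:ℝ) < (p:ℝ) := by exact_mod_cast hp.one_lt
  have hp2 : (2:ℝ) ≤ (p:ℝ) := by exact_mod_cast hp.two_le
  have hp0 : (0:ℝ) < p := by linarith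
  set κ : ℝ := (p:ℝ)/((p:ℝ)-1) with hκdef
  have hκ1 : 1 ≤ κ := by rw [hκdef, le_div_iff₀ (by linarith)]; linarith
  have hpm1 : (0:ℝ) < (p:ℝ) - 1 := by linarith
  have hκx : κ = 1 + 1/((p:ℝ)-1) := by
    rw [hκdef]; field_simp; ring
  have hκpow : κ^t ≤ 1 + (2^t - 1) * (1/((p:ℝ)-1)) := by
    rw [hκx]
    exact pow_bd_aux t _ (div_nonneg zero_le_one hpm1.le)
      (by rw [div_le_one hpm1]; linarith)
  have hκpow2 : κ^t ≤ 2^t := by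
    calc κ^t ≤ 1 + (2^t - 1) * (1/((p:ℝ)-1)) := hκpow
      _ ≤ 1 + (2^t - 1) * 1 := by
          have h2 : (1:ℝ) ≤ 2^t := one_le_pow₀ (by norm_num)
          apply add_le_add_right
          apply mul_le_mul_of_nonneg_left _ (by linarith)
          rw [div_le_one (by linarith)]; linarith
      _ = 2^t := by ring
  have htot : (Nat.totient p : ℝ) = (p:ℝ) - 1 := by
    rw [Nat.totient_prime hp, Nat.cast_sub hp.one_lt.le]; norm_num
  set S := Finset.univ.filter (fun n : Fin d → Fin p =>
    ∀ i, ((∑ j, A i j * ((n j : ℕ) : ℤ) + c i : ℤ) : ZMod p) ≠ 0) with hSdef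
  have hprod : ∀ n : Fin d → Fin p,
      (∏ i, localVonMangoldt p (∑ j, A i j * ((n j : ℕ) : ℤ) + c i)) =
      if (∀ i, ((∑ j, A i j * ((n j : ℕ) : ℤ) + c i : ℤ) : ZMod p) ≠ 0) then κ^t else 0 := by
    intro n
    by_cases h : ∀ i, ((∑ j, A i j * ((n j : ℕ) : ℤ) + c i : ℤ) : ZMod p) ≠ 0
    · rw [if_pos h]
      rw [Finset.prod_congr rfl (fun i _ => ?_), Finset.prod_const, Finset.card_univ,
        Fintype.card_fin]
      unfold localVonMangoldt
      rw [if_pos ((gcd_iff_aux p hp _).mpr (h i)), htot]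
    · rw [if_neg h]
      push_neg at h; obtain ⟨i, hi⟩ := h
      apply Finset.prod_eq_zero (Finset.mem_univ i)
      unfold localVonMangoldt
      rw [if_neg]
      rw [gcd_iff_aux p hp, not_ne_iff]
      exact hi
  have hβ : localFactor t d p A c = S.card * κ^t / (p:ℝ)^d := by
    unfold localFactor
    congr 1
    calc (∑ n : Fin d → Fin p, ∏ i, localVonMangoldt p (∑ j, A i j * ((n j : ℕ) : ℤ) + c i))
        = ∑ n : Fin d → Fin p,
          (if (∀ i, ((∑ j, A i j * ((n j : ℕ) : ℤ) + c i : ℤ) : ZMod p) ≠ 0)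
            then κ^t else 0) := Finset.sum_congr rfl fun n _ => hprod n
      _ = ∑ n ∈ S, κ^t := (Finset.sum_filter _ _).symm
      _ = S.card * κ^t := by rw [Finset.sum_const, nsmul_eq_mul]
  have hSle : (S.card : ℝ) ≤ (p:ℝ)^d := by
    have : S.card ≤ p^d := by
      calc S.card ≤ (Finset.univ : Finset (Fin d → Fin p)).card := Finset.card_filter_le _ _
        _ = p^d := by rw [Finset.card_univ, Fintype.card_fun, Fintype.card_fin, Fintype.card_fin]
    exact_mod_cast this
  have hβnonneg : 0 ≤ localFactor t d p A c := by
    rw [hβ]; positivity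
  have hβle : localFactor t d p A c ≤ κ^t := by
    rw [hβ, div_le_iff₀ (by positivity)]
    calc (S.card : ℝ) * κ^t ≤ (p:ℝ)^d * κ^t :=
          mul_le_mul_of_nonneg_right hSle (by positivity)
      _ = κ^t * (p:ℝ)^d := by ring
  rcases le_or_gt (p : ℕ) L with hpL | hpL
  · -- small primes: trivial bound
    have hpLr : (p:ℝ) ≤ L := by exact_mod_cast hpL
    have h2 : (1:ℝ) ≤ 2^t := one_le_pow₀ (by norm_num)
    rw [abs_le]
    have h1C : (1:ℝ) ≤ (L:ℝ)*(2^(t+1)+t+1)/p := by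
      rw [le_div_iff₀ hp0]
      nlinarith [(by positivity : (0:ℝ) < 2^(t+1)), (by positivity : (0:ℝ) ≤ (t:ℝ))]
    constructor
    · linarith
    · have hCp : (2:ℝ)^t ≤ (L : ℝ) * (2^(t+1) + t + 1) / p := by
        rw [le_div_iff₀ hp0, pow_succ]
        nlinarith [hpLr, (by positivity : (0:ℝ) < 2^t), (by exact_mod_cast ht : (1:ℝ) ≤ t),
          (by positivity : (0:ℝ) ≤ (t:ℝ))]
      linarith [le_trans hβle hκpow2]
  · -- large primes: p > L
    have hpLr : (L:ℝ) < p := by exact_mod_cast hpL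
    have hL1 : (1:ℝ) ≤ L := by exact_mod_cast hL
    -- lower bound on S.card
    have hbad : ∀ i : Fin t, (Finset.univ.filter fun n : Fin d → Fin p =>
        ((∑ j, A i j * ((n j : ℕ) : ℤ) + c i : ℤ) : ZMod p) = 0).card ≤ p ^ (d - 1) := by
      intro i
      obtain ⟨j₀, hj₀⟩ := Function.ne_iff.mp (hA i)
      apply count_le_aux p d hp _ _ j₀
      intro hz
      rw [ZMod.intCast_zmod_eq_zero_iff_dvd] at hz
      have habs : (p:ℤ) ≤ |A i j₀| :=
        Int.le_of_dvd (abs_pos.mpr hj₀) ((dvd_abs _ _).mpr hz)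
      have := hAL i j₀
      omega
    have hcomp : (Finset.univ.filter (fun n : Fin d → Fin p =>
        ¬ ∀ i, ((∑ j, A i j * ((n j : ℕ) : ℤ) + c i : ℤ) : ZMod p) ≠ 0)).card
        ≤ t * p ^ (d - 1) := by
      calc (Finset.univ.filter (fun n : Fin d → Fin p =>
          ¬ ∀ i, ((∑ j, A i j * ((n j : ℕ) : ℤ) + c i : ℤ) : ZMod p) ≠ 0)).card
          ≤ (Finset.univ.biUnion (fun i : Fin t => Finset.univ.filter
              fun n : Fin d → Fin p =>
              ((∑ j, A i j * ((n j : ℕ) : ℤ) + c i : ℤ) : ZMod p) = 0)).card := by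
            apply Finset.card_le_card
            intro n hn
            simp only [Finset.mem_filter, Finset.mem_univ, true_and, not_forall,
              not_ne_iff] at hn
            obtain ⟨i, hi⟩ := hn
            exact Finset.mem_biUnion.mpr ⟨i, Finset.mem_univ i, by
              simp only [Finset.mem_filter, Finset.mem_univ, true_and]; exact hi⟩
        _ ≤ ∑ i : Fin t, (Finset.univ.filter fun n : Fin d → Fin p =>
              ((∑ j, A i j * ((n j : ℕ) : ℤ) + c i : ℤ) : ZMod p) = 0).card :=
            Finset.card_biUnion_le
        _ ≤ ∑ _i : Fin t, p ^ (d - 1) := Finset.sum_le_sum fun i _ => hbad i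
        _ = t * p ^ (d - 1) := by rw [Finset.sum_const, Finset.card_univ,
            Fintype.card_fin, smul_eq_mul]
    have hScard : p^d ≤ S.card + t * p^(d-1) := by
      have hsplit := Finset.card_filter_add_card_filter_not
        (s := (Finset.univ : Finset (Fin d → Fin p)))
        (p := fun n : Fin d → Fin p =>
          ∀ i, ((∑ j, A i j * ((n j : ℕ) : ℤ) + c i : ℤ) : ZMod p) ≠ 0)
      have huniv : (Finset.univ : Finset (Fin d → Fin p)).card = p^d := by
        rw [Finset.card_univ, Fintype.card_fun, Fintype.card_fin, Fintype.card_fin]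
      rw [huniv] at hsplit
      calc p^d = _ := hsplit.symm
        _ ≤ S.card + t * p^(d-1) := Nat.add_le_add_left hcomp _
    have hScardR : (p:ℝ)^d - t * (p:ℝ)^(d-1) ≤ (S.card : ℝ) := by
      have : ((p^d : ℕ) : ℝ) ≤ ((S.card + t * p^(d-1) : ℕ) : ℝ) := by exact_mod_cast hScard
      push_cast at this
      linarith
    -- main estimates
    have hd' : d - 1 + 1 = d := Nat.succ_pred_eq_of_pos hd
    have hpd : (p:ℝ)^d = (p:ℝ) * (p:ℝ)^(d-1) := by
      calc (p:ℝ)^d = (p:ℝ)^(d-1+1) := by rw [hd']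
        _ = (p:ℝ) * (p:ℝ)^(d-1) := pow_succ' _ _
    have hlow : 1 - t/(p:ℝ) ≤ localFactor t d p A c := by
      rw [hβ]
      have h1 : (1 - t/(p:ℝ)) * (p:ℝ)^d ≤ (S.card : ℝ) * κ^t := by
        calc (1 - t/(p:ℝ)) * (p:ℝ)^d = (p:ℝ)^d - t * ((p:ℝ)^d / p) := by ring
          _ = (p:ℝ)^d - t * (p:ℝ)^(d-1) := by
              have hdiv : (p:ℝ)^d / p = (p:ℝ)^(d-1) := by
                rw [hpd]; exact mul_div_cancel_left₀ _ (ne_of_gt hp0)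
              rw [hdiv]
          _ ≤ (S.card : ℝ) := hScardR
          _ ≤ (S.card : ℝ) * κ^t := le_mul_of_one_le_right (by positivity)
              (one_le_pow₀ hκ1)
      rw [le_div_iff₀ (by positivity)]
      linarith
    have hup : localFactor t d p A c - 1 ≤ 2^(t+1)/(p:ℝ) := by
      have h2 : (1:ℝ) ≤ 2^t := one_le_pow₀ (by norm_num)
      have hx : (2^t - 1) * (1/((p:ℝ)-1)) ≤ 2^(t+1)/(p:ℝ) := by
        rw [mul_one_div, pow_succ, div_le_div_iff₀ hpm1 hp0]
        nlinarith
      linarith [le_trans hβle hκpow]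
    rw [abs_le]
    constructor
    · have htp : (t:ℝ)/(p:ℝ) ≤ (L : ℝ) * (2^(t+1) + t + 1) / p := by
        apply (div_le_div_iff_of_pos_right hp0).mpr
        nlinarith [(by positivity : (0:ℝ) < 2^(t+1)), (by positivity : (0:ℝ) ≤ (t:ℝ))]
      linarith
    · have h2p : (2:ℝ)^(t+1)/(p:ℝ) ≤ (L : ℝ) * (2^(t+1) + t + 1) / p := by
        apply (div_le_div_iff_of_pos_right hp0).mpr
        nlinarith [(by positivity : (0:ℝ) < 2^(t+1)), (by positivity : (0:ℝ) ≤ (t:ℝ))]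
      linarith
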